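/- For y₂, y₃ ∈ (0, √2): arctan(y₃(12 + y₃²)/16) < arctan(7√2/8) < π/2 - arctan(√2/2) < π/2 - arctan(y₂/2). -/

import Mathlib

open Real

theorem angle_chain (y₂ y₃ : ℝ) (h₂ : y₂ ∈ Set.Ioo (0:ℝ) (Real.sqrt 2))
    (h₃ : y₃ ∈ Set.Ioo (0:ℝ) (Real.sqrt 2)) :
    Real.arctan (y₃*(12 + y₃^2)/16) < Real.arctan (7*Real.sqrt 2/8) ∧
    Real.arctan (7*Real.sqrt 2/8) < π/2 - Real.arctan (Real.sqrt 2/2) ∧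
    π/2 - Real.arctan (Real.sqrt 2/2) < π/2 - Real.arctan (y₂/2) := by
  obtain ⟨h20, h2s⟩ := h₂
  obtain ⟨h30, h3s⟩ := h₃
  have hs : Real.sqrt 2 ^ 2 = 2 := Real.sq_sqrt (by norm_num)
  have hspos : (0:ℝ) < Real.sqrt 2 := Real.sqrt_pos.mpr (by norm_num)
  refine ⟨?_, ?_, ?_⟩
  · apply Real.arctan_strictMono
    nlinarith [sq_nonneg (y₃ + Real.sqrt 2), mul_pos h30 h30]
  · have h : π/2 - Real.arctan (Real.sqrt 2/2) = Real.arctan ((Real.sqrt 2/2)⁻¹) := by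
      rw [Real.arctan_inv_of_pos (by positivity)]
    rw [h]
    have : (Real.sqrt 2/2)⁻¹ = Real.sqrt 2 := by
      field_simp
      exact hs.symm
    rw [this]
    apply Real.arctan_strictMono
    nlinarith
  · have : Real.arctan (y₂/2) < Real.arctan (Real.sqrt 2/2) :=
      Real.arctan_strictMono (by linarith)
    linarith
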